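/- Let b > 2 be an integer and let G be a b-dc-semigroup. If i, j are non-negative integers, k, l are positive integers, and both I_b(i,k) ⊆ G and I_b(j,l) ⊆ G, then I_b(i+j, k+l) ⊆ G. -/

import Mathlib

/-- `Ib b i k` is the set of integers `x` with `b^i ≤ x < b^(i+k)`. -/
def Ib (b i k : ℕ) : Set ℕ := {x : ℕ | b ^ i ≤ x ∧ x < b ^ (i + k)}

/-- A set `G` of positive integers is a `b`-dc-semigroup if it is closed under
multiplication and closed with respect to the number of base-`b` digits. -/
def IsDCSemigroup (b : ℕ) (G : Set ℕ) : Prop :=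
  (∀ x ∈ G, 0 < x) ∧
  (∀ x ∈ G, ∀ y ∈ G, x * y ∈ G) ∧
  (∀ x ∈ G, ∀ y : ℕ, 0 < y → Nat.log b y = Nat.log b x → y ∈ G)

theorem stmt_1 (b : ℕ) (hb : 2 < b) (G : Set ℕ) (hG : IsDCSemigroup b G)
    (i j k l : ℕ) (hk : 0 < k) (hl : 0 < l)
    (h1 : Ib b i k ⊆ G) (h2 : Ib b j l ⊆ G) :
    Ib b (i + j) (k + l) ⊆ G := by
  intro x hx
  obtain ⟨hx1, hx2⟩ := hx
  have hb1 : 1 < b := by omega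
  have hpow_pos : 0 < b ^ (i + j) := pow_pos (by omega) _
  have hx0 : 0 < x := lt_of_lt_of_le hpow_pos hx1
  have hm1 : i + j ≤ Nat.log b x := (Nat.le_log_iff_pow_le hb1 (by omega)).mpr hx1
  have hm2 : Nat.log b x < i + j + (k + l) := (Nat.log_lt_iff_lt_pow hb1 (by omega)).mpr hx2
  obtain ⟨hpos, hmul, hdig⟩ := hG
  set m := Nat.log b x with hm
  by_cases hcase : m + 1 = i + j + k + l
  · -- top digit-block: use (b^(i+k)-1) * (b^(j+l)-1)
    have hbik : b ^ i < b ^ (i + k) := Nat.pow_lt_pow_right hb1 (by omega)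
    have hbjl : b ^ j < b ^ (j + l) := Nat.pow_lt_pow_right hb1 (by omega)
    have hu : (b ^ (i + k) - 1) ∈ Ib b i k := ⟨by omega, by
      have : 0 < b ^ (i + k) := pow_pos (by omega) _; omega⟩
    have hv : (b ^ (j + l) - 1) ∈ Ib b j l := ⟨by omega, by
      have : 0 < b ^ (j + l) := pow_pos (by omega) _; omega⟩
    have huvG : (b ^ (i + k) - 1) * (b ^ (j + l) - 1) ∈ G := hmul _ (h1 hu) _ (h2 hv)
    -- log of the product is m
    have hac : (i + k) + (j + l) = m + 1 := by omega
    have hAC : b ^ (i + k) * b ^ (j + l) = b * b ^ m := by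
      rw [← pow_add, hac, pow_succ, mul_comm]
    have hAm : b ^ (i + k) ≤ b ^ m := Nat.pow_le_pow_right (by omega) (by omega)
    have hCm : b ^ (j + l) ≤ b ^ m := Nat.pow_le_pow_right (by omega) (by omega)
    have hA1 : 1 ≤ b ^ (i + k) := Nat.one_le_pow _ _ (by omega)
    have hC1 : 1 ≤ b ^ (j + l) := Nat.one_le_pow _ _ (by omega)
    have key : ∀ A C : ℕ, 1 ≤ A → 1 ≤ C → A ≤ b ^ m → C ≤ b ^ m →
        A * C = b * b ^ m → b ^ m ≤ (A - 1) * (C - 1) := by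
      intro A C hA hC hAm' hCm' hAC'
      obtain ⟨A', rfl⟩ : ∃ A', A = A' + 1 := ⟨A - 1, by omega⟩
      obtain ⟨C', rfl⟩ : ∃ C', C = C' + 1 := ⟨C - 1, by omega⟩
      have h3 : 3 * b ^ m ≤ b * b ^ m := Nat.mul_le_mul_right _ (by omega)
      have hexp : (A' + 1) * (C' + 1) = A' * C' + A' + C' + 1 := by ring
      simp only [Nat.add_sub_cancel]
      omega
    have hlow : b ^ m ≤ (b ^ (i + k) - 1) * (b ^ (j + l) - 1) :=
      key _ _ hA1 hC1 hAm hCm hAC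
    have hhigh : (b ^ (i + k) - 1) * (b ^ (j + l) - 1) < b ^ (m + 1) := by
      calc (b ^ (i + k) - 1) * (b ^ (j + l) - 1) ≤ b ^ (i + k) * (b ^ (j + l) - 1) :=
            Nat.mul_le_mul_right _ (by omega)
        _ < b ^ (i + k) * b ^ (j + l) :=
            mul_lt_mul_of_pos_left (by omega) (by positivity)
        _ = b ^ (m + 1) := by rw [← pow_add, hac]
    have hlog : Nat.log b ((b ^ (i + k) - 1) * (b ^ (j + l) - 1)) = m :=
      Nat.log_eq_of_pow_le_of_lt_pow hlow hhigh
    exact hdig _ huvG x hx0 (by rw [hlog])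
  · -- otherwise m = s + t with s, t in range: use b^s * b^t
    obtain ⟨s, t, hs1, hs2, ht1, ht2, hst⟩ :
        ∃ s t, i ≤ s ∧ s < i + k ∧ j ≤ t ∧ t < j + l ∧ s + t = m := by
      refine ⟨max i (m - (j + l - 1)), m - max i (m - (j + l - 1)), ?_, ?_, ?_, ?_, ?_⟩ <;> omega
    have hu : b ^ s ∈ Ib b i k :=
      ⟨Nat.pow_le_pow_right (by omega) hs1, Nat.pow_lt_pow_right hb1 hs2⟩
    have hv : b ^ t ∈ Ib b j l :=
      ⟨Nat.pow_le_pow_right (by omega) ht1, Nat.pow_lt_pow_right hb1 ht2⟩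
    have huvG : b ^ s * b ^ t ∈ G := hmul _ (h1 hu) _ (h2 hv)
    have hlog : Nat.log b (b ^ s * b ^ t) = m := by
      rw [← pow_add, hst, Nat.log_pow hb1]
    exact hdig _ huvG x hx0 (by rw [hlog])
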